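/- Let Q : ℝ^{3×3} → ℝ be a quadratic form with c₁|sym G|² ≤ Q(G) = Q(sym G) ≤ c₂|sym G|² for positive constants c₁ ≤ c₂. Define on ℝ^{2×2}_sym the reduced form Q₂(A) = min_{d ∈ ℝ³} Q(ι(A) + d ⊗ e₃), where ι(A) is the 3×3 matrix with upper-left 2×2 block A and zeros elsewhere, and d ⊗ e₃ is the matrix whose third column is d and other columns are zero. Then the minimum is attained, the minimizing d depends linearly on A, and Q₂ is a quadratic form on ℝ^{2×2}_sym satisfying c₁'|A|² ≤ Q₂(A) ≤ c₂|A|² for some constant c₁' > 0 depending only on c₁ and c₂. -/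

import Mathlib

open Matrix

noncomputable section

def frob3 (M : Matrix (Fin 3) (Fin 3) ℝ) : ℝ := Real.sqrt (∑ i, ∑ j, (M i j) ^ 2)

def frob2 (M : Matrix (Fin 2) (Fin 2) ℝ) : ℝ := Real.sqrt (∑ i, ∑ j, (M i j) ^ 2)

def sym3 (G : Matrix (Fin 3) (Fin 3) ℝ) : Matrix (Fin 3) (Fin 3) ℝ := (1 / 2 : ℝ) • (G + Gᵀ)

/-- The embedding of a 2×2 matrix into the upper-left block of a 3×3 matrix. -/
def iota (A : Matrix (Fin 2) (Fin 2) ℝ) : Matrix (Fin 3) (Fin 3) ℝ :=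
  Matrix.of ![![A 0 0, A 0 1, 0], ![A 1 0, A 1 1, 0], ![0, 0, 0]]

/-- The 3×3 matrix d ⊗ e₃ whose third column is d and whose other columns vanish. -/
def colmat (d : Fin 3 → ℝ) : Matrix (Fin 3) (Fin 3) ℝ :=
  Matrix.of ![![0, 0, d 0], ![0, 0, d 1], ![0, 0, d 2]]
lemma colmat_add (d e : Fin 3 → ℝ) : colmat (d + e) = colmat d + colmat e := by
  ext i j; fin_cases i <;> fin_cases j <;> simp [colmat, Matrix.vecHead, Matrix.vecTail]

lemma colmat_smul (c : ℝ) (d : Fin 3 → ℝ) : colmat (c • d) = c • colmat d := by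
  ext i j; fin_cases i <;> fin_cases j <;> simp [colmat, Matrix.vecHead, Matrix.vecTail]

def colmatL : (Fin 3 → ℝ) →ₗ[ℝ] Matrix (Fin 3) (Fin 3) ℝ :=
  { toFun := colmat, map_add' := colmat_add, map_smul' := colmat_smul }

lemma iota_add (A B : Matrix (Fin 2) (Fin 2) ℝ) : iota (A + B) = iota A + iota B := by
  ext i j; fin_cases i <;> fin_cases j <;> simp [iota, Matrix.vecHead, Matrix.vecTail]

lemma iota_smul (c : ℝ) (A : Matrix (Fin 2) (Fin 2) ℝ) : iota (c • A) = c • iota A := by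
  ext i j; fin_cases i <;> fin_cases j <;> simp [iota, Matrix.vecHead, Matrix.vecTail]

def iotaL : Matrix (Fin 2) (Fin 2) ℝ →ₗ[ℝ] Matrix (Fin 3) (Fin 3) ℝ :=
  { toFun := iota, map_add' := iota_add, map_smul' := iota_smul }

lemma colmat_eq_sum (d : Fin 3 → ℝ) :
    colmat d = ∑ j : Fin 3, d j • colmat (Pi.single j 1) := by
  ext i k
  rw [Matrix.sum_apply, Fin.sum_univ_three]
  fin_cases i <;> fin_cases k <;> simp [colmat, Pi.single, Matrix.vecHead, Matrix.vecTail]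

lemma frob3_sq (A : Matrix (Fin 2) (Fin 2) ℝ) (hA : Aᵀ = A) (d : Fin 3 → ℝ) :
    frob3 (sym3 (iota A + colmat d)) ^ 2
      = frob2 A ^ 2 + (d 0 ^ 2 / 2 + d 1 ^ 2 / 2 + d 2 ^ 2) := by
  have hA' : A 1 0 = A 0 1 := by
    have := congrFun (congrFun hA 0) 1
    simpa [Matrix.transpose_apply] using this
  unfold frob3 frob2 sym3
  rw [Real.sq_sqrt (by positivity), Real.sq_sqrt (by positivity)]
  simp [Fin.sum_univ_three, Fin.sum_univ_two, iota, colmat, Matrix.transpose_apply,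
    Matrix.add_apply, Matrix.smul_apply, smul_eq_mul, Matrix.vecHead, Matrix.vecTail]
  rw [hA']
  ring


/-- For a quadratic form Q on ℝ^{3×3} with `c₁|sym G|² ≤ Q(G) = Q(sym G) ≤ c₂|sym G|²`,
the reduced form `Q₂(A) = min_d Q(ι(A) + d ⊗ e₃)` on symmetric 2×2 matrices: the minimum
is attained, the minimizer depends linearly on A, Q₂ is a quadratic form, and
`c₁'|A|² ≤ Q₂(A) ≤ c₂|A|²` for some c₁' > 0. -/
theorem stmt6 (c₁ c₂ : ℝ) (hc₁ : 0 < c₁) (hcc : c₁ ≤ c₂)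
    (Q : Matrix (Fin 3) (Fin 3) ℝ → ℝ)
    (L : Matrix (Fin 3) (Fin 3) ℝ →ₗ[ℝ] Matrix (Fin 3) (Fin 3) ℝ →ₗ[ℝ] ℝ)
    (hLsymm : ∀ A B, L A B = L B A) (hQL : ∀ G, Q G = L G G)
    (hQsym : ∀ G, Q G = Q (sym3 G))
    (hlow : ∀ G, c₁ * (frob3 (sym3 G)) ^ 2 ≤ Q G)
    (hup : ∀ G, Q G ≤ c₂ * (frob3 (sym3 G)) ^ 2) :
    ∃ (c₁' : ℝ) (T : Matrix (Fin 2) (Fin 2) ℝ →ₗ[ℝ] (Fin 3 → ℝ))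
      (L₂ : Matrix (Fin 2) (Fin 2) ℝ →ₗ[ℝ] Matrix (Fin 2) (Fin 2) ℝ →ₗ[ℝ] ℝ),
      0 < c₁' ∧ (∀ A B, L₂ A B = L₂ B A) ∧
      ∀ A : Matrix (Fin 2) (Fin 2) ℝ, Aᵀ = A →
        (∀ d : Fin 3 → ℝ, Q (iota A + colmat (T A)) ≤ Q (iota A + colmat d)) ∧
        Q (iota A + colmat (T A)) = L₂ A A ∧
        c₁' * (frob2 A) ^ 2 ≤ Q (iota A + colmat (T A)) ∧
        Q (iota A + colmat (T A)) ≤ c₂ * (frob2 A) ^ 2 := by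
  classical
  set M : Matrix (Fin 3) (Fin 3) ℝ :=
    Matrix.of (fun i j => L (colmat (Pi.single j 1)) (colmat (Pi.single i 1))) with hM
  have key : ∀ d e : Fin 3 → ℝ, L (colmat d) (colmat e) = e ⬝ᵥ (M *ᵥ d) := by
    intro d e
    have lhs : L (colmat d) (colmat e) = ∑ x, ∑ y, d x *
        (e y * L (colmat (Pi.single x 1)) (colmat (Pi.single y 1))) := by
      rw [colmat_eq_sum d, colmat_eq_sum e]
      simp only [map_sum, _root_.map_smul, LinearMap.sum_apply, LinearMap.smul_apply,
        smul_eq_mul, Finset.mul_sum]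
      rw [Finset.sum_comm]
      exact Finset.sum_congr rfl fun a _ => Finset.sum_congr rfl fun b _ => by ring
    have rhs : e ⬝ᵥ (M *ᵥ d) = ∑ y, ∑ x, e y *
        (L (colmat (Pi.single x 1)) (colmat (Pi.single y 1)) * d x) := by
      simp only [dotProduct, Matrix.mulVec, hM, Matrix.of_apply, Finset.mul_sum]
    rw [lhs, rhs]
    conv_rhs => rw [Finset.sum_comm]
    exact Finset.sum_congr rfl fun y _ => Finset.sum_congr rfl fun x _ => by ring
  have hQcol : ∀ x : Fin 3 → ℝ, x ⬝ᵥ (M *ᵥ x) = Q (colmat x) := by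
    intro x; rw [hQL, key]
  have hMherm : M.IsHermitian := by
    ext i j
    simp only [Matrix.conjTranspose_apply, star_trivial]
    exact hLsymm _ _
  have hfrobcol : ∀ x : Fin 3 → ℝ,
      frob3 (sym3 (colmat x)) ^ 2 = x 0 ^ 2 / 2 + x 1 ^ 2 / 2 + x 2 ^ 2 := by
    intro x
    have h0 : (0 : Matrix (Fin 2) (Fin 2) ℝ)ᵀ = 0 := by simp
    have h := frob3_sq 0 h0 x
    have hi0 : iota (0 : Matrix (Fin 2) (Fin 2) ℝ) = 0 := map_zero iotaL
    have hf0 : frob2 (0 : Matrix (Fin 2) (Fin 2) ℝ) = 0 := by simp [frob2]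
    rw [hi0, zero_add, hf0] at h
    simpa using h
  have hMpos : M.PosDef := by
    refine Matrix.posDef_iff_dotProduct_mulVec.mpr ⟨hMherm, fun {x} hx => ?_⟩
    rw [star_trivial, hQcol]
    have h1 := hlow (colmat x)
    have h2 : 0 < frob3 (sym3 (colmat x)) ^ 2 := by
      rw [hfrobcol]
      rcases Function.ne_iff.mp hx with ⟨i, hi⟩
      simp only [Pi.zero_apply] at hi
      fin_cases i <;> positivity
    nlinarith
  have hMdet : IsUnit M.det := hMpos.det_pos.ne'.isUnit
  have hMinv : M * M⁻¹ = 1 := Matrix.mul_nonsing_inv M hMdet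
  set vL : Matrix (Fin 2) (Fin 2) ℝ →ₗ[ℝ] (Fin 3 → ℝ) :=
    LinearMap.pi (fun i => (L.flip (colmat (Pi.single i 1))).comp iotaL) with hvL
  have hv : ∀ A i, vL A i = L (iota A) (colmat (Pi.single i 1)) := by
    intro A i; rfl
  set T : Matrix (Fin 2) (Fin 2) ℝ →ₗ[ℝ] (Fin 3 → ℝ) :=
    -((Matrix.mulVecLin M⁻¹).comp vL) with hT
  have hTA : ∀ A, M *ᵥ (T A) = -(vL A) := by
    intro A
    have h : T A = -(M⁻¹ *ᵥ vL A) := rfl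
    rw [h, Matrix.mulVec_neg, Matrix.mulVec_mulVec, hMinv, Matrix.one_mulVec]
  have hXcol : ∀ (X : Matrix (Fin 3) (Fin 3) ℝ) (h : Fin 3 → ℝ),
      L X (colmat h) = ∑ i, h i * L X (colmat (Pi.single i 1)) := by
    intro X h
    rw [colmat_eq_sum h]
    simp [map_sum, _root_.map_smul]
  have hcross : ∀ A (h : Fin 3 → ℝ),
      L (iota A + colmat (T A)) (colmat h) = 0 := by
    intro A h
    rw [map_add, LinearMap.add_apply, key, hTA, hXcol]
    simp [dotProduct, hv]
  set F : Matrix (Fin 2) (Fin 2) ℝ →ₗ[ℝ] Matrix (Fin 3) (Fin 3) ℝ :=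
    iotaL + colmatL.comp T with hF
  have hFA : ∀ A, F A = iota A + colmat (T A) := fun A => rfl
  refine ⟨c₁, T, L.compl₁₂ F F, hc₁, ?_, ?_⟩
  · intro A B
    simp only [LinearMap.compl₁₂_apply]
    exact hLsymm _ _
  intro A hA
  have hmin : ∀ d : Fin 3 → ℝ, Q (iota A + colmat (T A)) ≤ Q (iota A + colmat d) := by
    intro d
    have hsplit : iota A + colmat d = (iota A + colmat (T A)) + colmat (d - T A) := by
      have h : colmat (d - T A) = colmat d - colmat (T A) := map_sub colmatL _ _
      rw [h]; abel
    rw [hsplit, hQL, hQL]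
    simp only [map_add, LinearMap.add_apply]
    have h1 : L (iota A + colmat (T A)) (colmat (d - T A)) = 0 := hcross A _
    have h2 : L (colmat (d - T A)) (iota A + colmat (T A)) = 0 := by
      rw [hLsymm]; exact h1
    simp only [map_add, LinearMap.add_apply] at h1 h2
    have h3 : 0 ≤ L (colmat (d - T A)) (colmat (d - T A)) := by
      rw [← hQL]
      refine le_trans ?_ (hlow _)
      exact mul_nonneg hc₁.le (sq_nonneg _)
    linarith
  refine ⟨hmin, ?_, ?_, ?_⟩
  · rw [hQL]
    simp only [LinearMap.compl₁₂_apply, hFA]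
  · calc c₁ * frob2 A ^ 2
        ≤ c₁ * frob3 (sym3 (iota A + colmat (T A))) ^ 2 := by
          rw [frob3_sq A hA]
          have h : (0:ℝ) ≤ T A 0 ^ 2 / 2 + T A 1 ^ 2 / 2 + T A 2 ^ 2 := by positivity
          nlinarith
      _ ≤ Q (iota A + colmat (T A)) := hlow _
  · calc Q (iota A + colmat (T A))
        ≤ Q (iota A + colmat 0) := hmin 0
      _ ≤ c₂ * frob3 (sym3 (iota A + colmat 0)) ^ 2 := hup _
      _ = c₂ * frob2 A ^ 2 := by
          rw [frob3_sq A hA]; simp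

end
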